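/- Graded Lie-admissibility: the Gerstenhaber bracket satisfies the graded Jacobi identity, i.e. for all multilinear maps f ∈ C^m, g ∈ C^n, h ∈ C^p, (−1)^{|f||h|}[[f,g],h] + (−1)^{|g||f|}[[g,h],f] + (−1)^{|h||g|}[[h,f],g] = 0; together with the graded antisymmetry [f,g] = −(−1)^{|f||g|}[g,f], this makes (C, [·,·]) a graded Lie algebra. -/
import Mathlib


open Finset

section OperadPrelude

variable {K : Type*} [CommRing K] {L : Type*} [AddCommGroup L] [Module K L]

/-- `C K L n`: the `K`-module of `n`-multilinear maps `L^n → L`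
(the degree-`n` component of the endomorphism operad of `L`). -/
abbrev C (K L : Type*) [CommRing K] [AddCommGroup L] [Module K L] (n : ℕ) :=
  MultilinearMap K (fun _ : Fin n => L) L

/-- The extension of an `n`-ary multilinear operation to sequences `ℕ → L`:
it evaluates `f` on the first `n` entries of the sequence.  Two `n`-ary
multilinear operations are equal iff their extensions are equal, so operadic
identities are stated as identities between extensions. -/
def ex {n : ℕ} (f : C K L n) : (ℕ → L) → L := fun x => f fun j => x j.1

/-- The sign `(-1)^e` for an integer exponent `e`. -/
def sgn (e : ℤ) : ℤ := (((-1 : ℤˣ) ^ e : ℤˣ) : ℤ)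

/-- Partial composition `f ∘ᵢ g`, where `n = deg g`:
`(f ∘ᵢ g)(x₀, x₁, …) = (-1)^{i(n-1)} f(x₀,…,x_{i-1}, g(x_i,…,x_{i+n-1}), x_{i+n},…)`. -/
def pc (n i : ℕ) (f g : (ℕ → L) → L) : (ℕ → L) → L :=
  fun x => sgn ((i : ℤ) * ((n : ℤ) - 1)) •
    f fun j => if j < i then x j else if j = i then g (fun k => x (i + k)) else x (j + n - 1)

/-- Total composition `f ∘ g := Σ_{i=0}^{m-1} f ∘ᵢ g`, where `m = deg f`, `n = deg g`. -/
def tc (m n : ℕ) (f g : (ℕ → L) → L) : (ℕ → L) → L :=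
  fun x => ∑ i ∈ Finset.range m, pc n i f g x

/-- The associator `(h, f, g) := (h ∘ f) ∘ g − h ∘ (f ∘ g)` of the total composition,
where `m = deg h`, `n = deg f`, `p = deg g`. -/
def assoc (m n p : ℕ) (h f g : (ℕ → L) → L) : (ℕ → L) → L :=
  fun x => tc (m + n - 1) p (tc m n h f) g x - tc m (n + p - 1) h (tc n p f g) x

/-- The brace `⟨h|fg⟩ := Σ (h ∘ᵢ f) ∘ⱼ g`, summed over `0 ≤ i ≤ m-2`,
`i + n ≤ j ≤ m + n - 2`, where `m = deg h`, `n = deg f`, `p = deg g`. -/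
def br2 (m n p : ℕ) (h f g : (ℕ → L) → L) : (ℕ → L) → L :=
  fun x => ∑ i ∈ Finset.range (m - 1), ∑ j ∈ Finset.Icc (i + n) (m + n - 2),
    pc p j (pc n i h f) g x

/-- The triple brace `⟨h|fgb⟩ := Σ ((h ∘ᵢ f) ∘ⱼ g) ∘ₖ b`, summed over `0 ≤ i ≤ m-3`,
`i + n ≤ j ≤ m + n - 3`, `j + p ≤ k ≤ m + n + p - 3`, where
`m = deg h`, `n = deg f`, `p = deg g`, `q = deg b`. -/
def br3 (m n p q : ℕ) (h f g b : (ℕ → L) → L) : (ℕ → L) → L :=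
  fun x => ∑ i ∈ Finset.range (m - 2), ∑ j ∈ Finset.Icc (i + n) (m + n - 3),
    ∑ k ∈ Finset.Icc (j + p) (m + n + p - 3),
      pc q k (pc p j (pc n i h f) g) b x

/-- The Gerstenhaber bracket `[f,g] := f ∘ g − (-1)^{|f||g|} g ∘ f`,
where `m = deg f`, `n = deg g`, `|f| = m - 1`, `|g| = n - 1`. -/
def gb (m n : ℕ) (f g : (ℕ → L) → L) : (ℕ → L) → L :=
  fun x => tc m n f g x - sgn (((m : ℤ) - 1) * ((n : ℤ) - 1)) • tc n m g f x

/-- The cup product `f ⌣ g := (-1)^{deg f} (μ ∘₀ f) ∘_{deg f} g`,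
where `m = deg f`, `n = deg g`. -/
def cup (μ : C K L 2) (m n : ℕ) (f g : (ℕ → L) → L) : (ℕ → L) → L :=
  fun x => sgn (m : ℤ) • pc n m (pc m 0 (ex μ) f) g x

/-- The coboundary operator `δ_μ f := −[f, μ]`, where `m = deg f`. -/
def delta (μ : C K L 2) (m : ℕ) (f : (ℕ → L) → L) : (ℕ → L) → L :=
  fun x => - gb m 2 f (ex μ) x


-- ============ auxiliary lemmas ============

private lemma sgn_add' (a b : ℤ) : sgn (a + b) = sgn a * sgn b := by
  unfold sgn; rw [zpow_add, Units.val_mul]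

private lemma sgn_sq' (a : ℤ) : sgn a * sgn a = 1 := by
  rw [← sgn_add', show a + a = 2 * a by ring]
  unfold sgn
  rw [zpow_mul, show ((-1:ℤˣ)^(2:ℤ)) = 1 by
    rw [show (2:ℤ) = ((2:ℕ):ℤ) by norm_num, zpow_natCast]; decide]
  simp

private lemma sgn_congr {a b : ℤ} (h : a = b) : sgn a = sgn b := by rw [h]

private def slotBase (i m N : ℕ) (x : ℕ → L) : Fin m → L :=
  fun j => if (j : ℕ) < i then x j else if (j : ℕ) = i then 0 else x (j + N - 1)

private def slotOf {m : ℕ} (f : C K L m) {i : ℕ} (hi : i < m) (v : Fin m → L) : L →ₗ[K] L where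
  toFun a := f (Function.update v ⟨i, hi⟩ a)
  map_add' a b := f.map_update_add v ⟨i, hi⟩ a b
  map_smul' c a := f.map_update_smul v ⟨i, hi⟩ c a

private lemma pc_ex {m : ℕ} (f : C K L m) {i : ℕ} (hi : i < m) (N : ℕ)
    (g : (ℕ → L) → L) (x : ℕ → L) :
    pc N i (ex f) g x
      = sgn ((i:ℤ) * ((N:ℤ) - 1)) • slotOf f hi (slotBase i m N x) (g fun k => x (i + k)) := by
  simp only [pc, ex, slotOf, slotBase, LinearMap.coe_mk, AddHom.coe_mk]
  congr 1
  apply congrArg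
  funext j
  rcases eq_or_ne j (⟨i, hi⟩ : Fin m) with hj | hj
  · subst hj
    simp [Function.update_self]
  · rw [Function.update_of_ne hj]
    have hj' : (j:ℕ) ≠ i := fun hh => hj (Fin.ext hh)
    simp [slotBase, hj']

private lemma pc_left_sum {ι : Type*} (s : Finset ι) (Fk : ι → (ℕ → L) → L)
    (N j : ℕ) (Z : (ℕ → L) → L) (x : ℕ → L) :
    pc N j (fun y => ∑ k ∈ s, Fk k y) Z x = ∑ k ∈ s, pc N j (Fk k) Z x := by
  simp only [pc]; rw [Finset.smul_sum]

private lemma pc_left_sub_smul (c : ℤ) (F1 F2 : (ℕ → L) → L) (N j : ℕ)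
    (Z : (ℕ → L) → L) (x : ℕ → L) :
    pc N j (fun y => F1 y - c • F2 y) Z x = pc N j F1 Z x - c • pc N j F2 Z x := by
  simp only [pc, smul_sub]; rw [smul_comm]

private lemma pc_left_zero (W : (ℕ → L) → L) (hW : ∀ y, W y = 0) (N j : ℕ)
    (Z : (ℕ → L) → L) (x : ℕ → L) : pc N j W Z x = 0 := by
  simp only [pc, hW, smul_zero]

private lemma pc_ex_right_sum {m' : ℕ} (f : C K L m') {i : ℕ} (hi : i < m') (N : ℕ)
    {ι : Type*} (s : Finset ι) (Y : ι → (ℕ → L) → L) (x : ℕ → L) :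
    pc N i (ex f) (fun y => ∑ d ∈ s, Y d y) x = ∑ d ∈ s, pc N i (ex f) (Y d) x := by
  rw [pc_ex f hi]
  simp only [map_sum, Finset.smul_sum]
  exact Finset.sum_congr rfl fun d _ => (pc_ex f hi N (Y d) x).symm

private lemma tc_left_sub_smul (a b : ℕ) (c : ℤ) (F1 F2 Z : (ℕ → L) → L) (x : ℕ → L) :
    tc a b (fun y => F1 y - c • F2 y) Z x = tc a b F1 Z x - c • tc a b F2 Z x := by
  simp only [tc, pc_left_sub_smul, Finset.sum_sub_distrib, Finset.smul_sum]

private lemma tc_left_zero (a b : ℕ) (W : (ℕ → L) → L) (hW : ∀ y, W y = 0)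
    (Z : (ℕ → L) → L) (x : ℕ → L) : tc a b W Z x = 0 := by
  simp only [tc]
  exact Finset.sum_eq_zero fun j _ => pc_left_zero W hW b j Z x

private lemma tc_zero_arity (b : ℕ) (F Z : (ℕ → L) → L) (x : ℕ → L) :
    tc 0 b F Z x = 0 := by simp [tc]

private lemma tc_ex_right_sub_smul {p : ℕ} (h : C K L p) (N : ℕ) (c : ℤ)
    (Y1 Y2 : (ℕ → L) → L) (x : ℕ → L) :
    tc p N (ex h) (fun y => Y1 y - c • Y2 y) x
      = tc p N (ex h) Y1 x - c • tc p N (ex h) Y2 x := by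
  simp only [tc, Finset.smul_sum, ← Finset.sum_sub_distrib]
  refine Finset.sum_congr rfl fun i hi => ?_
  have hi' := Finset.mem_range.mp hi
  rw [pc_ex h hi', pc_ex h hi', pc_ex h hi']
  rw [map_sub, map_zsmul, smul_sub, smul_comm]

private lemma tc_ex_right_zero {p : ℕ} (h : C K L p) (N : ℕ) (Y : (ℕ → L) → L)
    (hY : ∀ y, Y y = 0) (x : ℕ → L) : tc p N (ex h) Y x = 0 := by
  simp only [tc]
  refine Finset.sum_eq_zero fun i hi => ?_
  rw [pc_ex h (Finset.mem_range.mp hi), hY]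
  simp

private lemma pc_disjoint {n : ℕ} (g : C K L n) (i e p : ℕ) (F H : (ℕ → L) → L)
    (x : ℕ → L) :
    pc p (i + n + e) (pc n i F (ex g)) H x
      = sgn (((n:ℤ) - 1) * ((p:ℤ) - 1)) • pc n i (pc p (i + 1 + e) F H) (ex g) x := by
  simp only [pc, ex]
  simp only [smul_smul]
  congr 1
  · rw [← sgn_add', ← sgn_add', ← sgn_add']
    exact sgn_congr (by push_cast; ring)
  · apply congrArg
    funext l
    by_cases h1 : l < i
    · have e1 : l < i + n + e := by omega
      have e2 : l < i + 1 + e := by omega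
      simp [h1, e1, e2]
    · by_cases h2 : l = i
      · subst h2
        have e1 : l < l + 1 + e := by omega
        simp [e1]
        apply congrArg
        funext j
        have hj := j.isLt
        have hlt : l + (j:ℕ) < l + n + e := by omega
        simp [hlt]
      · by_cases h3 : l < i + 1 + e
        · have e1 : l + n - 1 < i + n + e := by omega
          simp [h1, h2, h3, e1]
        · by_cases h4 : l = i + 1 + e
          · subst h4
            have e1 : ¬ (i + 1 + e + n - 1 < i + n + e) := by omega
            have e2 : i + 1 + e + n - 1 = i + n + e := by omega
            simp [h1, h2, h3, e1, e2]
            apply congrArg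
            funext k
            have k1 : ¬ (i + 1 + e + k < i) := by omega
            have k2 : ¬ (i + 1 + e + k = i) := by omega
            simp [k1, k2]
            congr 1
            omega
          · have e1 : ¬ (l + n - 1 < i + n + e) := by omega
            have e2 : ¬ (l + n - 1 = i + n + e) := by omega
            have e3 : ¬ (l + p - 1 < i) := by omega
            have e4 : ¬ (l + p - 1 = i) := by omega
            simp [h1, h2, h3, h4, e1, e2, e3, e4]
            congr 1
            omega

private lemma pc_middle {m' : ℕ} (f : C K L m') {i d n : ℕ} (hi : i < m') (hd : d < n)
    (p : ℕ) (G H : (ℕ → L) → L) (x : ℕ → L) :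
    pc p (i + d) (pc n i (ex f) G) H x = pc (n + p - 1) i (ex f) (pc p d G H) x := by
  have hc : ((n + p - 1 : ℕ) : ℤ) = (n:ℤ) + (p:ℤ) - 1 := by omega
  rw [show pc p (i+d) (pc n i (ex f) G) H x
      = sgn (((i+d : ℕ):ℤ) * ((p:ℤ)-1)) • pc n i (ex f) G
          (fun j => if j < i + d then x j
            else if j = i + d then H fun k => x (i + d + k) else x (j + p - 1)) from rfl]
  rw [pc_ex f hi, pc_ex f hi]
  rw [show (pc p d G H) (fun k => x (i + k))
      = sgn ((d:ℤ) * ((p:ℤ)-1)) • G (fun k => if k < d then x (i+k)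
          else if k = d then H fun k2 => x (i + (d + k2)) else x (i + (k + p - 1))) from rfl]
  rw [map_zsmul]
  beta_reduce
  have hbase : slotBase i m' n (fun j => if j < i + d then x j
        else if j = i + d then H fun k => x (i + d + k) else x (j + p - 1))
      = slotBase i m' (n + p - 1) x := by
    funext j
    simp only [slotBase]
    by_cases h1 : (j:ℕ) < i
    · have e0 : (j:ℕ) < i + d := by omega
      simp [h1, e0]
    · by_cases h2 : (j:ℕ) = i
      · simp [h1, h2]
      · have e1 : ¬ ((j:ℕ) + n - 1 < i + d) := by omega
        have e2 : ¬ ((j:ℕ) + n - 1 = i + d) := by omega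
        simp [h1, h2, e1, e2]
        congr 1
        omega
  have harg : G (fun k => if i + k < i + d then x (i + k)
        else if i + k = i + d then H fun k2 => x (i + d + k2) else x (i + k + p - 1))
      = G (fun k => if k < d then x (i+k)
        else if k = d then H fun k2 => x (i + (d + k2)) else x (i + (k + p - 1))) := by
    apply congrArg
    funext k
    by_cases h1 : k < d
    · have e0 : i + k < i + d := by omega
      simp [h1, e0]
    · by_cases h2 : k = d
      · subst h2
        simp
        apply congrArg
        funext k2
        congr 1
        omega
      · have e1 : ¬ (i + k < i + d) := by omega
        have e2 : ¬ (i + k = i + d) := by omega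
        simp [h1, h2, e1, e2]
        congr 1
        omega
  rw [hbase, harg]
  simp only [smul_smul]
  congr 1
  rw [← sgn_add', ← sgn_add']
  exact sgn_congr (by rw [hc]; push_cast; ring)

private lemma sum_range_split {M : Type*} [AddCommMonoid M] {i m : ℕ} (n : ℕ)
    (him : i < m) (a : ℕ → M) :
    ∑ j ∈ range (m + n - 1), a j
      = ((∑ j ∈ range i, a j) + ∑ d ∈ range n, a (i + d))
        + ∑ e ∈ range (m - 1 - i), a (i + n + e) := by
  have key := Finset.sum_range_add a (i + n) (m - 1 - i)
  rw [show (i + n) + (m - 1 - i) = m + n - 1 by omega] at key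
  rw [key, Finset.sum_range_add a i n]

private lemma sum_tri {M : Type*} [AddCommMonoid M] (m : ℕ) (c : ℕ → ℕ → M) :
    ∑ i ∈ range m, ∑ e ∈ range (m - 1 - i), c i e
      = ∑ i ∈ range m, ∑ j ∈ range i, c j (i - j - 1) := by
  rw [Finset.sum_sigma' (range m) _ (fun i e => c i e),
      Finset.sum_sigma' (range m) _ (fun i j => c j (i - j - 1))]
  refine Finset.sum_nbij' (fun q => ⟨q.1 + 1 + q.2, q.1⟩) (fun q => ⟨q.2, q.1 - q.2 - 1⟩)
    ?_ ?_ ?_ ?_ ?_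
  · rintro ⟨a, b⟩ hab
    simp only [Finset.mem_sigma, Finset.mem_range] at *
    omega
  · rintro ⟨a, b⟩ hab
    simp only [Finset.mem_sigma, Finset.mem_range] at *
    omega
  · rintro ⟨a, b⟩ hab
    simp only [Finset.mem_sigma, Finset.mem_range] at hab
    dsimp only
    congr 1 <;> first | omega | exact heq_of_eq (by omega)
  · rintro ⟨a, b⟩ hab
    simp only [Finset.mem_sigma, Finset.mem_range] at hab
    dsimp only
    congr 1 <;> first | omega | exact heq_of_eq (by omega)
  · rintro ⟨a, b⟩ hab
    simp only [Finset.mem_sigma, Finset.mem_range] at hab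
    simp only []
    apply congrArg
    omega

private lemma sum_le {M : Type*} [AddCommMonoid M] (Mm : ℕ) (c : ℕ → ℕ → M) :
    ∑ j ∈ range Mm, ∑ i ∈ range (j + 1), c i j
      = ∑ j ∈ range Mm, ∑ e ∈ range (Mm - j), c j (j + e) := by
  rw [Finset.sum_sigma' (range Mm) _ (fun j i => c i j),
      Finset.sum_sigma' (range Mm) _ (fun j e => c j (j + e))]
  refine Finset.sum_nbij' (fun q => ⟨q.2, q.1 - q.2⟩) (fun q => ⟨q.1 + q.2, q.1⟩)
    ?_ ?_ ?_ ?_ ?_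
  · rintro ⟨a, b⟩ hab
    simp only [Finset.mem_sigma, Finset.mem_range] at *
    omega
  · rintro ⟨a, b⟩ hab
    simp only [Finset.mem_sigma, Finset.mem_range] at *
    omega
  · rintro ⟨a, b⟩ hab
    simp only [Finset.mem_sigma, Finset.mem_range] at hab
    dsimp only
    congr 1 <;> first | omega | exact heq_of_eq (by omega)
  · rintro ⟨a, b⟩ hab
    simp only [Finset.mem_sigma, Finset.mem_range] at hab
    dsimp only
    congr 1 <;> first | omega | exact heq_of_eq (by omega)
  · rintro ⟨a, b⟩ hab
    simp only [Finset.mem_sigma, Finset.mem_range] at hab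
    simp only []
    apply congrArg
    omega

private lemma assoc_decomp {m n p : ℕ} (f : C K L m) (g : C K L n) (h : C K L p)
    (x : ℕ → L) :
    tc (m + n - 1) p (tc m n (ex f) (ex g)) (ex h) x
      - tc m (n + p - 1) (ex f) (tc n p (ex g) (ex h)) x
    = (∑ i ∈ range m, ∑ j ∈ range i, pc p j (pc n i (ex f) (ex g)) (ex h) x)
      + ∑ i ∈ range m, ∑ e ∈ range (m - 1 - i), pc p (i + n + e) (pc n i (ex f) (ex g)) (ex h) x := by
  have h1 : tc (m + n - 1) p (tc m n (ex f) (ex g)) (ex h) x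
      = ∑ i ∈ range m, ∑ j ∈ range (m + n - 1), pc p j (pc n i (ex f) (ex g)) (ex h) x := by
    calc tc (m + n - 1) p (tc m n (ex f) (ex g)) (ex h) x
        = ∑ j ∈ range (m + n - 1),
            pc p j (fun y => ∑ i ∈ range m, pc n i (ex f) (ex g) y) (ex h) x := rfl
      _ = ∑ j ∈ range (m + n - 1), ∑ i ∈ range m, pc p j (pc n i (ex f) (ex g)) (ex h) x :=
          Finset.sum_congr rfl fun j _ => pc_left_sum _ _ _ _ _ _
      _ = _ := Finset.sum_comm
  have h2 : tc m (n + p - 1) (ex f) (tc n p (ex g) (ex h)) x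
      = ∑ i ∈ range m, ∑ d ∈ range n, pc (n + p - 1) i (ex f) (pc p d (ex g) (ex h)) x := by
    calc tc m (n + p - 1) (ex f) (tc n p (ex g) (ex h)) x
        = ∑ i ∈ range m,
            pc (n + p - 1) i (ex f) (fun y => ∑ d ∈ range n, pc p d (ex g) (ex h) y) x := rfl
      _ = _ := Finset.sum_congr rfl fun i hi =>
            pc_ex_right_sum f (Finset.mem_range.mp hi) _ _ _ _
  rw [h1, h2]
  have h3 : ∑ i ∈ range m, ∑ j ∈ range (m + n - 1), pc p j (pc n i (ex f) (ex g)) (ex h) x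
      = ((∑ i ∈ range m, ∑ j ∈ range i, pc p j (pc n i (ex f) (ex g)) (ex h) x)
          + ∑ i ∈ range m, ∑ d ∈ range n, pc p (i + d) (pc n i (ex f) (ex g)) (ex h) x)
        + ∑ i ∈ range m, ∑ e ∈ range (m - 1 - i),
            pc p (i + n + e) (pc n i (ex f) (ex g)) (ex h) x := by
    rw [← Finset.sum_add_distrib, ← Finset.sum_add_distrib]
    exact Finset.sum_congr rfl fun i hi =>
      sum_range_split n (Finset.mem_range.mp hi) _
  have h4 : ∑ i ∈ range m, ∑ d ∈ range n, pc p (i + d) (pc n i (ex f) (ex g)) (ex h) x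
      = ∑ i ∈ range m, ∑ d ∈ range n, pc (n + p - 1) i (ex f) (pc p d (ex g) (ex h)) x :=
    Finset.sum_congr rfl fun i hi => Finset.sum_congr rfl fun d hd =>
      pc_middle f (Finset.mem_range.mp hi) (Finset.mem_range.mp hd) p _ _ x
  rw [h3, h4]
  abel

private lemma preLie {m n p : ℕ} (f : C K L m) (g : C K L n) (h : C K L p) (x : ℕ → L) :
    tc (m + n - 1) p (tc m n (ex f) (ex g)) (ex h) x
      - tc m (n + p - 1) (ex f) (tc n p (ex g) (ex h)) x
    = sgn (((n:ℤ) - 1) * ((p:ℤ) - 1)) •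
      (tc (m + p - 1) n (tc m p (ex f) (ex h)) (ex g) x
        - tc m (p + n - 1) (ex f) (tc p n (ex h) (ex g)) x) := by
  rw [assoc_decomp f g h x, assoc_decomp f h g x]
  have hR : ∑ i ∈ range m, ∑ e ∈ range (m - 1 - i),
        pc p (i + n + e) (pc n i (ex f) (ex g)) (ex h) x
      = sgn (((n:ℤ) - 1) * ((p:ℤ) - 1)) •
        ∑ i ∈ range m, ∑ j ∈ range i, pc n j (pc p i (ex f) (ex h)) (ex g) x := by
    calc ∑ i ∈ range m, ∑ e ∈ range (m - 1 - i),
          pc p (i + n + e) (pc n i (ex f) (ex g)) (ex h) x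
        = ∑ i ∈ range m, ∑ e ∈ range (m - 1 - i),
            sgn (((n:ℤ) - 1) * ((p:ℤ) - 1)) • pc n i (pc p (i + 1 + e) (ex f) (ex h)) (ex g) x :=
          Finset.sum_congr rfl fun i _ => Finset.sum_congr rfl fun e _ =>
            pc_disjoint g i e p (ex f) (ex h) x
      _ = sgn (((n:ℤ) - 1) * ((p:ℤ) - 1)) •
            ∑ i ∈ range m, ∑ e ∈ range (m - 1 - i),
              pc n i (pc p (i + 1 + e) (ex f) (ex h)) (ex g) x := by
          simp only [← Finset.smul_sum]
      _ = _ := by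
          congr 1
          rw [sum_tri m (fun i e => pc n i (pc p (i + 1 + e) (ex f) (ex h)) (ex g) x)]
          exact Finset.sum_congr rfl fun i hi => Finset.sum_congr rfl fun j hj => by
            rw [show j + 1 + (i - j - 1) = i by
              have := Finset.mem_range.mp hj; omega]
  have hL : ∑ i ∈ range m, ∑ j ∈ range i, pc p j (pc n i (ex f) (ex g)) (ex h) x
      = sgn (((n:ℤ) - 1) * ((p:ℤ) - 1)) •
        ∑ i ∈ range m, ∑ e ∈ range (m - 1 - i),
          pc n (i + p + e) (pc p i (ex f) (ex h)) (ex g) x := by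
    calc ∑ i ∈ range m, ∑ j ∈ range i, pc p j (pc n i (ex f) (ex g)) (ex h) x
        = ∑ i ∈ range m, ∑ j ∈ range i,
            sgn (((n:ℤ) - 1) * ((p:ℤ) - 1)) •
              pc n (j + p + (i - j - 1)) (pc p j (ex f) (ex h)) (ex g) x := by
          refine Finset.sum_congr rfl fun i hi => Finset.sum_congr rfl fun j hj => ?_
          have hj' := Finset.mem_range.mp hj
          have e1 := pc_disjoint h j (i - j - 1) n (ex f) (ex g) x
          rw [show j + p + (i - j - 1) = j + p + (i - j - 1) from rfl] at e1
          rw [show j + 1 + (i - j - 1) = i by omega] at e1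
          rw [e1, smul_smul, show sgn (((n:ℤ) - 1) * ((p:ℤ) - 1)) * sgn (((p:ℤ) - 1) * ((n:ℤ) - 1))
              = 1 by rw [show (((p:ℤ) - 1) * ((n:ℤ) - 1)) = (((n:ℤ) - 1) * ((p:ℤ) - 1)) by ring]; exact sgn_sq' _,
            one_smul]
      _ = sgn (((n:ℤ) - 1) * ((p:ℤ) - 1)) •
            ∑ i ∈ range m, ∑ j ∈ range i,
              pc n (j + p + (i - j - 1)) (pc p j (ex f) (ex h)) (ex g) x := by
          simp only [← Finset.smul_sum]
      _ = _ := by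
          congr 1
          rw [← sum_tri m (fun i e => pc n (i + p + e) (pc p i (ex f) (ex h)) (ex g) x)]
  rw [hL, hR, smul_add]
  exact add_comm _ _

private lemma sgn_aab (a b : ℤ) : sgn (a + a + b) = sgn b := by
  rw [sgn_add', sgn_add', sgn_sq', one_mul]

private def Jterm (a b cc : ℕ) (X Y Z : (ℕ → L) → L) : (ℕ → L) → L :=
  fun x => sgn (((a:ℤ) - 1) * ((cc:ℤ) - 1)) • gb (a + b - 1) cc (gb a b X Y) Z x

private lemma Jterm_expand' (a b cc : ℕ) (X Y : (ℕ → L) → L) (z : C K L cc) (x : ℕ → L) :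
    Jterm a b cc X Y (ex z) x
      = sgn (((a:ℤ) - 1) * ((cc:ℤ) - 1)) • tc (a + b - 1) cc (tc a b X Y) (ex z) x
        - (sgn (((a:ℤ) - 1) * ((cc:ℤ) - 1)) * sgn (((a:ℤ) - 1) * ((b:ℤ) - 1))) •
            tc (a + b - 1) cc (tc b a Y X) (ex z) x
        - (sgn (((a:ℤ) - 1) * ((cc:ℤ) - 1)) * sgn ((((a + b - 1 : ℕ):ℤ) - 1) * ((cc:ℤ) - 1))) •
            tc cc (a + b - 1) (ex z) (tc a b X Y) x
        + (sgn (((a:ℤ) - 1) * ((cc:ℤ) - 1)) * sgn ((((a + b - 1 : ℕ):ℤ) - 1) * ((cc:ℤ) - 1))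
            * sgn (((a:ℤ) - 1) * ((b:ℤ) - 1))) •
            tc cc (a + b - 1) (ex z) (tc b a Y X) x := by
  rw [show Jterm a b cc X Y (ex z) x
      = sgn (((a:ℤ) - 1) * ((cc:ℤ) - 1)) •
          (tc (a + b - 1) cc (gb a b X Y) (ex z) x
            - sgn ((((a + b - 1 : ℕ):ℤ) - 1) * ((cc:ℤ) - 1)) •
                tc cc (a + b - 1) (ex z) (gb a b X Y) x) from rfl]
  rw [show gb a b X Y = (fun y => tc a b X Y y - sgn (((a:ℤ) - 1) * ((b:ℤ) - 1)) • tc b a Y X y)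
      from rfl]
  rw [tc_left_sub_smul, tc_ex_right_sub_smul]
  module

private lemma jac_main {m n p : ℕ} (f : C K L m) (g : C K L n) (h : C K L p)
    (hmn : 1 ≤ m + n) (hnp : 1 ≤ n + p) (hpm : 1 ≤ p + m) (x : ℕ → L) :
    Jterm m n p (ex f) (ex g) (ex h) x + Jterm n p m (ex g) (ex h) (ex f) x
      + Jterm p m n (ex h) (ex f) (ex g) x = 0 := by
  have hP1 := preLie f g h x
  have hP2 := preLie g h f x
  have hP3 := preLie h f g x
  rw [Jterm_expand', Jterm_expand', Jterm_expand']
  have o1 : sgn (((n:ℤ) - 1) * ((m:ℤ) - 1)) = sgn (((m:ℤ) - 1) * ((n:ℤ) - 1)) :=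
    sgn_congr (by ring)
  have o2 : sgn (((p:ℤ) - 1) * ((n:ℤ) - 1)) = sgn (((n:ℤ) - 1) * ((p:ℤ) - 1)) :=
    sgn_congr (by ring)
  have o3 : sgn (((p:ℤ) - 1) * ((m:ℤ) - 1)) = sgn (((m:ℤ) - 1) * ((p:ℤ) - 1)) :=
    sgn_congr (by ring)
  have e1 : sgn (((m:ℤ) - 1) * ((p:ℤ) - 1)) * sgn ((((m + n - 1 : ℕ):ℤ) - 1) * ((p:ℤ) - 1))
      = sgn (((n:ℤ) - 1) * ((p:ℤ) - 1)) := by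
    rw [← sgn_add', show ((m + n - 1 : ℕ):ℤ) = (m:ℤ) + (n:ℤ) - 1 from by omega,
      show ((m:ℤ) - 1) * ((p:ℤ) - 1) + ((m:ℤ) + (n:ℤ) - 1 - 1) * ((p:ℤ) - 1)
        = (((m:ℤ) - 1) * ((p:ℤ) - 1)) + (((m:ℤ) - 1) * ((p:ℤ) - 1)) + (((n:ℤ) - 1) * ((p:ℤ) - 1))
        from by ring, sgn_aab]
  have e2 : sgn (((n:ℤ) - 1) * ((m:ℤ) - 1)) * sgn ((((n + p - 1 : ℕ):ℤ) - 1) * ((m:ℤ) - 1))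
      = sgn (((m:ℤ) - 1) * ((p:ℤ) - 1)) := by
    rw [← sgn_add', show ((n + p - 1 : ℕ):ℤ) = (n:ℤ) + (p:ℤ) - 1 from by omega,
      show ((n:ℤ) - 1) * ((m:ℤ) - 1) + ((n:ℤ) + (p:ℤ) - 1 - 1) * ((m:ℤ) - 1)
        = (((n:ℤ) - 1) * ((m:ℤ) - 1)) + (((n:ℤ) - 1) * ((m:ℤ) - 1)) + (((m:ℤ) - 1) * ((p:ℤ) - 1))
        from by ring, sgn_aab]
  have e3 : sgn (((p:ℤ) - 1) * ((n:ℤ) - 1)) * sgn ((((p + m - 1 : ℕ):ℤ) - 1) * ((n:ℤ) - 1))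
      = sgn (((m:ℤ) - 1) * ((n:ℤ) - 1)) := by
    rw [← sgn_add', show ((p + m - 1 : ℕ):ℤ) = (p:ℤ) + (m:ℤ) - 1 from by omega,
      show ((p:ℤ) - 1) * ((n:ℤ) - 1) + ((p:ℤ) + (m:ℤ) - 1 - 1) * ((n:ℤ) - 1)
        = (((p:ℤ) - 1) * ((n:ℤ) - 1)) + (((p:ℤ) - 1) * ((n:ℤ) - 1)) + (((m:ℤ) - 1) * ((n:ℤ) - 1))
        from by ring, sgn_aab]
  rw [e1, e2, e3, o1, o2, o3]
  -- normalize arities in the preLie identities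
  rw [show m + p - 1 = p + m - 1 by omega, show p + n - 1 = n + p - 1 by omega] at hP1
  rw [show n + m - 1 = m + n - 1 by omega, show m + p - 1 = p + m - 1 by omega, o3] at hP2
  rw [show p + n - 1 = n + p - 1 by omega, show n + m - 1 = m + n - 1 by omega] at hP3
  linear_combination (norm := module)
    sgn (((m:ℤ) - 1) * ((p:ℤ) - 1)) • hP1 + sgn (((m:ℤ) - 1) * ((n:ℤ) - 1)) • hP2
      + sgn (((n:ℤ) - 1) * ((p:ℤ) - 1)) • hP3

private lemma Qskew {p : ℕ} (h : C K L p) (f g : C K L 0) (x : ℕ → L) :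
    tc (p - 1) 0 (tc p 0 (ex h) (ex g)) (ex f) x
      + tc (p - 1) 0 (tc p 0 (ex h) (ex f)) (ex g) x = 0 := by
  have hs : sgn ((((0:ℕ):ℤ) - 1) * (((0:ℕ):ℤ) - 1)) = -1 := by
    norm_num
    simp [sgn]
  have expand : ∀ (u v : C K L 0), tc (p - 1) 0 (tc p 0 (ex h) (ex u)) (ex v) x
      = ∑ j ∈ range (p - 1), ∑ i ∈ range p, pc 0 j (pc 0 i (ex h) (ex u)) (ex v) x := by
    intro u v
    calc tc (p - 1) 0 (tc p 0 (ex h) (ex u)) (ex v) x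
        = ∑ j ∈ range (p - 1),
            pc 0 j (fun y => ∑ i ∈ range p, pc 0 i (ex h) (ex u) y) (ex v) x := rfl
      _ = _ := Finset.sum_congr rfl fun j _ => pc_left_sum _ _ _ _ _ _
  have split : ∀ (u v : C K L 0),
      ∑ j ∈ range (p - 1), ∑ i ∈ range p, pc 0 j (pc 0 i (ex h) (ex u)) (ex v) x
      = (∑ j ∈ range (p - 1), ∑ i ∈ range (j + 1), pc 0 j (pc 0 i (ex h) (ex u)) (ex v) x)
        + ∑ j ∈ range (p - 1), ∑ e ∈ range (p - 1 - j),
            pc 0 j (pc 0 (j + 1 + e) (ex h) (ex u)) (ex v) x := by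
    intro u v
    rw [← Finset.sum_add_distrib]
    refine Finset.sum_congr rfl fun j hj => ?_
    have hj' := Finset.mem_range.mp hj
    have key := Finset.sum_range_add (fun i => pc 0 j (pc 0 i (ex h) (ex u)) (ex v) x)
      (j + 1) (p - 1 - j)
    rw [show (j + 1) + (p - 1 - j) = p by omega] at key
    rw [key]
  rw [expand g f, expand f g, split g f, split f g]
  have keyA : ∑ j ∈ range (p - 1), ∑ i ∈ range (j + 1), pc 0 j (pc 0 i (ex h) (ex g)) (ex f) x
      = - ∑ j ∈ range (p - 1), ∑ e ∈ range (p - 1 - j),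
          pc 0 j (pc 0 (j + 1 + e) (ex h) (ex f)) (ex g) x := by
    have step : ∀ j ∈ range (p - 1), ∀ i ∈ range (j + 1),
        pc 0 j (pc 0 i (ex h) (ex g)) (ex f) x
          = - pc 0 i (pc 0 (j + 1) (ex h) (ex f)) (ex g) x := by
      intro j hj i hi
      have hi' := Finset.mem_range.mp hi
      have e1 := pc_disjoint g i (j - i) 0 (ex h) (ex f) x
      rw [show i + 0 + (j - i) = j by omega, show i + 1 + (j - i) = j + 1 by omega, hs] at e1
      rw [e1, neg_one_zsmul]
    calc ∑ j ∈ range (p - 1), ∑ i ∈ range (j + 1), pc 0 j (pc 0 i (ex h) (ex g)) (ex f) x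
        = ∑ j ∈ range (p - 1), ∑ i ∈ range (j + 1),
            (- pc 0 i (pc 0 (j + 1) (ex h) (ex f)) (ex g) x) := by
          refine Finset.sum_congr rfl fun j hj => Finset.sum_congr rfl fun i hi => ?_
          exact step j hj i hi
      _ = - ∑ j ∈ range (p - 1), ∑ i ∈ range (j + 1),
            pc 0 i (pc 0 (j + 1) (ex h) (ex f)) (ex g) x := by
          simp [Finset.sum_neg_distrib]
      _ = _ := by
          congr 1
          rw [sum_le (p - 1) (fun i j => pc 0 i (pc 0 (j + 1) (ex h) (ex f)) (ex g) x)]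
          exact Finset.sum_congr rfl fun j _ => Finset.sum_congr rfl fun e _ => by
            rw [show j + e + 1 = j + 1 + e by omega]
  have keyB : ∑ j ∈ range (p - 1), ∑ e ∈ range (p - 1 - j),
        pc 0 j (pc 0 (j + 1 + e) (ex h) (ex g)) (ex f) x
      = - ∑ j ∈ range (p - 1), ∑ i ∈ range (j + 1), pc 0 j (pc 0 i (ex h) (ex f)) (ex g) x := by
    have step : ∀ j ∈ range (p - 1), ∀ e ∈ range (p - 1 - j),
        pc 0 j (pc 0 (j + 1 + e) (ex h) (ex g)) (ex f) x
          = - pc 0 (j + e) (pc 0 j (ex h) (ex f)) (ex g) x := by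
      intro j hj e he
      have e1 := pc_disjoint f j e 0 (ex h) (ex g) x
      rw [show j + 0 + e = j + e by omega, hs, neg_one_zsmul] at e1
      rw [e1, neg_neg]
    calc ∑ j ∈ range (p - 1), ∑ e ∈ range (p - 1 - j),
          pc 0 j (pc 0 (j + 1 + e) (ex h) (ex g)) (ex f) x
        = ∑ j ∈ range (p - 1), ∑ e ∈ range (p - 1 - j),
            (- pc 0 (j + e) (pc 0 j (ex h) (ex f)) (ex g) x) := by
          refine Finset.sum_congr rfl fun j hj => Finset.sum_congr rfl fun e he => ?_
          exact step j hj e he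
      _ = - ∑ j ∈ range (p - 1), ∑ e ∈ range (p - 1 - j),
            pc 0 (j + e) (pc 0 j (ex h) (ex f)) (ex g) x := by
          simp [Finset.sum_neg_distrib]
      _ = _ := by
          congr 1
          exact (sum_le (p - 1) (fun i j => pc 0 j (pc 0 i (ex h) (ex f)) (ex g) x)).symm
  rw [keyA, keyB]
  abel

private lemma jac_deg {p : ℕ} (f g : C K L 0) (h : C K L p) (x : ℕ → L) :
    Jterm 0 0 p (ex f) (ex g) (ex h) x + Jterm 0 p 0 (ex g) (ex h) (ex f) x
      + Jterm p 0 0 (ex h) (ex f) (ex g) x = 0 := by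
  have hs : sgn ((((0:ℕ):ℤ) - 1) * (((0:ℕ):ℤ) - 1)) = -1 := by
    norm_num
    simp [sgn]
  rw [Jterm_expand', Jterm_expand', Jterm_expand']
  simp only [Nat.zero_add, Nat.add_zero, Nat.zero_sub]
  simp only [tc_zero_arity]
  have hz2 : ∀ (u v : C K L 0), tc p 0 (ex h) (tc 0 0 (ex u) (ex v)) x = 0 := fun u v =>
    tc_ex_right_zero h 0 _ (fun y => by simp [tc]) x
  have hz3 : ∀ (A B Z : (ℕ → L) → L), tc (p - 1) 0 (tc 0 p A B) Z x = 0 := fun A B Z =>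
    tc_left_zero _ _ _ (fun y => by simp [tc]) Z x
  rw [hz2 f g, hz2 g f, hz3 (ex g) (ex h) (ex f), hz3 (ex f) (ex h) (ex g)]
  simp only [smul_zero, sub_zero, zero_sub, add_zero, zero_add, neg_add_eq_zero, mul_zero]
  rw [hs, neg_one_mul, neg_smul,
    show sgn (((p:ℤ) - 1) * (((0:ℕ):ℤ) - 1)) = sgn ((((0:ℕ):ℤ) - 1) * ((p:ℤ) - 1)) from
      sgn_congr (by ring)]
  linear_combination (norm := module)
    (-(sgn ((((0:ℕ):ℤ) - 1) * ((p:ℤ) - 1)))) • Qskew h f g x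

/-- graded Lie-admissibility: the Gerstenhaber bracket satisfies
the graded Jacobi identity and graded antisymmetry. -/
theorem gerstenhaber_bracket_graded_lie
    {m n p : ℕ} (f : C K L m) (g : C K L n) (h : C K L p) :
    (sgn (((m : ℤ) - 1) * ((p : ℤ) - 1)) •
          gb (m + n - 1) p (gb m n (ex f) (ex g)) (ex h)
        + sgn (((n : ℤ) - 1) * ((m : ℤ) - 1)) •
            gb (n + p - 1) m (gb n p (ex g) (ex h)) (ex f)
        + sgn (((p : ℤ) - 1) * ((n : ℤ) - 1)) •
            gb (p + m - 1) n (gb p m (ex h) (ex f)) (ex g) = 0) ∧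
      gb m n (ex f) (ex g)
        = -(sgn (((m : ℤ) - 1) * ((n : ℤ) - 1)) • gb n m (ex g) (ex f)) := by
  constructor
  · funext x
    simp only [Pi.add_apply, Pi.smul_apply, Pi.zero_apply]
    show Jterm m n p (ex f) (ex g) (ex h) x + Jterm n p m (ex g) (ex h) (ex f) x
        + Jterm p m n (ex h) (ex f) (ex g) x = 0
    by_cases h1 : m = 0 ∧ n = 0
    · obtain ⟨rfl, rfl⟩ := h1
      exact jac_deg f g h x
    · by_cases h2 : n = 0 ∧ p = 0
      · obtain ⟨rfl, rfl⟩ := h2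
        have h' := jac_deg g h f x
        calc Jterm m 0 0 (ex f) (ex g) (ex h) x + Jterm 0 0 m (ex g) (ex h) (ex f) x
              + Jterm 0 m 0 (ex h) (ex f) (ex g) x
            = Jterm 0 0 m (ex g) (ex h) (ex f) x + Jterm 0 m 0 (ex h) (ex f) (ex g) x
              + Jterm m 0 0 (ex f) (ex g) (ex h) x := by abel
          _ = 0 := h'
      · by_cases h3 : p = 0 ∧ m = 0
        · obtain ⟨rfl, rfl⟩ := h3
          have h' := jac_deg h f g x
          calc Jterm 0 n 0 (ex f) (ex g) (ex h) x + Jterm n 0 0 (ex g) (ex h) (ex f) x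
                + Jterm 0 0 n (ex h) (ex f) (ex g) x
              = Jterm 0 0 n (ex h) (ex f) (ex g) x + Jterm 0 n 0 (ex f) (ex g) (ex h) x
                + Jterm n 0 0 (ex g) (ex h) (ex f) x := by abel
            _ = 0 := h'
        · exact jac_main f g h (by omega) (by omega) (by omega) x
  · funext x
    show gb m n (ex f) (ex g) x
        = (-(sgn (((m:ℤ) - 1) * ((n:ℤ) - 1)) • gb n m (ex g) (ex f))) x
    simp only [Pi.neg_apply, Pi.smul_apply]
    simp only [gb]
    rw [show sgn (((n:ℤ) - 1) * ((m:ℤ) - 1)) = sgn (((m:ℤ) - 1) * ((n:ℤ) - 1)) from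
      sgn_congr (by ring)]
    rw [smul_sub, smul_smul, sgn_sq', one_smul]
    abel


end OperadPrelude
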